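/- Let p₁, ..., p_s be distinct primes and (a₁,b₁), ..., (a_s,b_s) pairs of coprime integers with each a_i ≠ 0 and b_i > 0. Let L = lcm(b₁,...,b_s). Then the polynomial X^L − p₁^{a₁ L / b₁} ··· p_s^{a_s L / b_s} is irreducible over ℚ. -/

import Mathlib

open Polynomial

lemma padicValRat_zpow {p : ℕ} [Fact p.Prime] {q : ℚ} (hq : q ≠ 0) (z : ℤ) :
    padicValRat p (q ^ z) = z * padicValRat p q := by
  obtain ⟨n, rfl | rfl⟩ := z.eq_nat_or_neg
  · rw [zpow_natCast, padicValRat.pow _]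
  · rw [zpow_neg, zpow_natCast, padicValRat.inv, padicValRat.pow _]
    push_cast
    ring

lemma padicValRat_prod {p : ℕ} [Fact p.Prime] {ι : Type*} (t : Finset ι) (f : ι → ℚ)
    (hf : ∀ i ∈ t, f i ≠ 0) :
    padicValRat p (∏ i ∈ t, f i) = ∑ i ∈ t, padicValRat p (f i) := by
  classical
  induction t using Finset.induction_on with
  | empty => simp
  | @insert x t' hx ih =>
    rw [Finset.prod_insert hx, Finset.sum_insert hx,
      padicValRat.mul (hf x (Finset.mem_insert_self x t'))
        (Finset.prod_ne_zero_iff.2 fun i hi => hf i (Finset.mem_insert_of_mem hi)),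
      ih fun i hi => hf i (Finset.mem_insert_of_mem hi)]

lemma keyA {s : ℕ} (a : Fin s → ℤ) (b : Fin s → ℕ)
    (hcop : ∀ i, IsCoprime (a i) (b i : ℤ)) (L : ℕ) (hL : L = Finset.univ.lcm b)
    (hL0 : 0 < L) {q : ℕ} (hq : q.Prime) (hqL : q ∣ L) :
    ∃ j, ¬ (q : ℤ) ∣ a j * ((L / b j : ℕ) : ℤ) := by
  by_contra h
  push_neg at h
  have hall : ∀ i, b i ∣ L / q := by
    intro i
    have hbiL : b i ∣ L := hL ▸ Finset.dvd_lcm (Finset.mem_univ i)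
    by_cases hqb : q ∣ b i
    · have hqa : ¬ (q : ℤ) ∣ a i := by
        intro hdvd
        have hu := (hcop i).isUnit_of_dvd' hdvd (Int.natCast_dvd_natCast.2 hqb)
        rw [Int.isUnit_iff] at hu
        have := hq.one_lt
        omega
      have hqprime : Prime (q : ℤ) := Nat.prime_iff_prime_int.1 hq
      have h2 : (q : ℤ) ∣ ((L / b i : ℕ) : ℤ) :=
        ((hqprime.dvd_mul.1 (h i)).resolve_left hqa)
      have h3 : q ∣ L / b i := Int.natCast_dvd_natCast.1 h2
      have hmul : b i * q ∣ L := by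
        obtain ⟨t, ht⟩ := h3
        exact ⟨t, by rw [← Nat.div_mul_cancel hbiL, ht]; ring⟩
      exact (Nat.dvd_div_iff_mul_dvd hqL).2 (by rwa [mul_comm] at hmul)
    · have hco : Nat.Coprime (b i) q := (hq.coprime_iff_not_dvd.2 hqb).symm
      have : b i ∣ L / q * q := by rwa [Nat.div_mul_cancel hqL]
      exact hco.dvd_of_dvd_mul_right this
  have hdvd : Finset.univ.lcm b ∣ L / q := Finset.lcm_dvd fun i _ => hall i
  rw [← hL] at hdvd
  have h4 : L / q < L := Nat.div_lt_self hL0 hq.one_lt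
  have h5 : 0 < L / q := Nat.div_pos (Nat.le_of_dvd hL0 hqL) hq.pos
  have := Nat.le_of_dvd h5 hdvd
  omega
open Polynomial in
theorem stmt_8 (s : ℕ) (p : Fin s → ℕ) (hp : ∀ i, (p i).Prime)
    (hinj : Function.Injective p)
    (a : Fin s → ℤ) (b : Fin s → ℕ) (ha : ∀ i, a i ≠ 0) (hb : ∀ i, 0 < b i)
    (hcop : ∀ i, IsCoprime (a i) (b i : ℤ))
    (L : ℕ) (hL : L = Finset.univ.lcm b) :
    Irreducible ((X : ℚ[X]) ^ L -
      C (∏ i, (p i : ℚ) ^ (a i * (L / b i : ℕ)))) := by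
  set c : ℚ := ∏ i, (p i : ℚ) ^ (a i * (L / b i : ℕ)) with hc
  have hpi0 : ∀ i, (0:ℚ) < (p i : ℚ) := fun i => by exact_mod_cast (hp i).pos
  have hc0 : 0 < c := Finset.prod_pos fun i _ => zpow_pos (hpi0 i) _
  have hL0 : L ≠ 0 := by
    rw [hL]
    intro h
    rw [Finset.lcm_eq_zero_iff] at h
    obtain ⟨i, _, hi⟩ := h
    exact (hb i).ne' hi
  set α : ℝ := (c : ℝ) ^ ((L : ℝ)⁻¹) with hαdef
  have hcR : (0:ℝ) < (c:ℝ) := by exact_mod_cast hc0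
  have hαpos : 0 < α := Real.rpow_pos_of_pos hcR _
  have hαL : α ^ L = (c : ℝ) := Real.rpow_inv_natCast_pow hcR.le hL0
  have hroot : Polynomial.aeval α ((X : ℚ[X]) ^ L - C c) = 0 := by
    simp [hαL]
  have hint : IsIntegral ℚ α := ⟨_, monic_X_pow_sub_C c hL0, hroot⟩
  set P : ℚ[X] := minpoly ℚ α with hP
  set d : ℕ := P.natDegree with hd
  have hd0 : 0 < d := minpoly.natDegree_pos hint
  have hdvd : P ∣ (X : ℚ[X]) ^ L - C c := minpoly.dvd ℚ α hroot
  have hne : ((X : ℚ[X]) ^ L - C c) ≠ 0 := X_pow_sub_C_ne_zero (Nat.pos_of_ne_zero hL0) c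
  have hdle : d ≤ L := by
    have := natDegree_le_of_dvd hdvd hne
    rwa [natDegree_X_pow_sub_C] at this
  -- the absolute value of the constant coefficient equals α ^ d
  have hPmonic : P.Monic := minpoly.monic hint
  set r : ℚ := |P.coeff 0| with hr
  have hrα : (r : ℝ) = α ^ d := by
    set Q : ℂ[X] := P.map (algebraMap ℚ ℂ) with hQdef
    have hQmonic : Q.Monic := hPmonic.map _
    have hsplits : Q.Splits := IsAlgClosed.splits Q
    have hcard : Q.roots.card = d := by
      rw [splits_iff_card_roots.1 hsplits, hQdef, natDegree_map]
    have hroots : ∀ z ∈ Q.roots, ‖z‖ = α := by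
      intro z hz
      have hzr : Q.IsRoot z := (mem_roots hQmonic.ne_zero).1 hz
      have hdvdC : Q ∣ ((X : ℂ[X]) ^ L - C (c : ℂ)) := by
        have h' := Polynomial.map_dvd (algebraMap ℚ ℂ) hdvd
        have : ((X : ℚ[X]) ^ L - C c).map (algebraMap ℚ ℂ)
            = (X : ℂ[X]) ^ L - C (c : ℂ) := by
          simp [Polynomial.map_sub, Polynomial.map_pow, map_C, eq_ratCast]
        rwa [this] at h'
      have hz2 : z ^ L = (c : ℂ) := by
        obtain ⟨w, hw⟩ := hdvdC
        have h0 : ((X : ℂ[X]) ^ L - C (c : ℂ)).eval z = 0 := by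
          rw [hw, eval_mul, hzr.eq_zero, zero_mul]
        have := h0
        simp only [eval_sub, eval_pow, eval_X, eval_C, sub_eq_zero] at this
        exact this
      have habs : ‖z‖ ^ L = (c : ℝ) := by
        rw [← norm_pow, hz2]
        rw [show ((c : ℚ) : ℂ) = (((c : ℝ)) : ℂ) by push_cast; ring]
        rw [Complex.norm_real, Real.norm_eq_abs, abs_of_pos hcR]
      have h1 := Real.pow_rpow_inv_natCast (norm_nonneg z) hL0 (x := ‖z‖)
      rw [habs] at h1
      rw [← h1, hαdef]
    have hrepl : Q.roots.map (‖·‖) = Multiset.replicate d α :=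
      Multiset.eq_replicate.2 ⟨by simp [hcard], by
        intro x hx
        obtain ⟨z, hz, rfl⟩ := Multiset.mem_map.1 hx
        exact hroots z hz⟩
    have hcoeff := hsplits.coeff_zero_eq_prod_roots_of_monic hQmonic
    have habs0 : ‖Q.coeff 0‖ = α ^ d := by
      rw [hcoeff, norm_mul, norm_pow, norm_neg, norm_one, one_pow, one_mul,
        show ‖Q.roots.prod‖ = (Q.roots.map (‖·‖)).prod from map_multiset_prod (normHom (α := ℂ)) _, hrepl, Multiset.prod_replicate]
    have hQ0 : Q.coeff 0 = (((P.coeff 0 : ℚ) : ℝ) : ℂ) := by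
      rw [hQdef, coeff_map]
      push_cast
      simp [eq_ratCast]
    rw [hQ0, Complex.norm_real, Real.norm_eq_abs] at habs0
    rw [← habs0, hr]
    push_cast
    ring
  -- hence r ^ L = c ^ d
  have hrL : r ^ L = c ^ d := by
    have : ((r ^ L : ℚ) : ℝ) = ((c ^ d : ℚ) : ℝ) := by
      push_cast
      rw [hrα, ← pow_mul, mul_comm d L, pow_mul, hαL]
    exact_mod_cast this
  have hr0 : r ≠ 0 := by
    intro h
    rw [h] at hrα
    push_cast at hrα
    exact (pow_pos hαpos d).ne' hrα.symm
  -- number theory: L ∣ d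
  have hLd : L ∣ d := by
    by_contra hnd
    set g := Nat.gcd d L with hg
    have hgpos : 0 < g := Nat.gcd_pos_of_pos_right d (Nat.pos_of_ne_zero hL0)
    set L' := L / g with hL'def
    set d' := d / g with hd'def
    have hgL : g ∣ L := Nat.gcd_dvd_right d L
    have hgd : g ∣ d := Nat.gcd_dvd_left d L
    have hgL' : L = g * L' := (Nat.mul_div_cancel' hgL).symm
    have hgd' : d = g * d' := (Nat.mul_div_cancel' hgd).symm
    have hcopr : Nat.Coprime d' L' := Nat.coprime_div_gcd_div_gcd hgpos
    have hL'1 : L' ≠ 1 := by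
      intro h
      have hLg : L = g := by rw [hgL', h, mul_one]
      exact hnd (hLg ▸ hgd)
    set q := L'.minFac with hqdef
    have hq : q.Prime := Nat.minFac_prime hL'1
    have hqL' : q ∣ L' := Nat.minFac_dvd L'
    have hqL : q ∣ L := hqL'.trans (Nat.div_dvd_of_dvd hgL)
    obtain ⟨j, hj⟩ := keyA a b hcop L hL (Nat.pos_of_ne_zero hL0) hq hqL
    haveI : Fact (p j).Prime := ⟨hp j⟩
    have hvc : padicValRat (p j) c = a j * ((L / b j : ℕ) : ℤ) := by
      rw [hc, padicValRat_prod _ _ (fun i _ => zpow_ne_zero _ (hpi0 i).ne')]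
      rw [Finset.sum_eq_single j]
      · rw [padicValRat_zpow (hpi0 j).ne', padicValRat.of_nat, padicValNat_self]
        simp
      · intro i _ hij
        haveI : Fact (p i).Prime := ⟨hp i⟩
        rw [padicValRat_zpow (hpi0 i).ne', padicValRat.of_nat,
          padicValNat_primes (p := p j) (q := p i) (fun h => hij (hinj h.symm))]
        simp
      · simp
    have hv : (L : ℤ) * padicValRat (p j) r = (d : ℤ) * padicValRat (p j) c := by
      have h1 : padicValRat (p j) (r ^ L) = (L : ℤ) * padicValRat (p j) r :=
        padicValRat.pow _
      have h2 : padicValRat (p j) (c ^ d) = (d : ℤ) * padicValRat (p j) c :=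
        padicValRat.pow _
      rw [← h1, ← h2, hrL]
    rw [hvc] at hv
    have hg0 : (g : ℤ) ≠ 0 := by exact_mod_cast hgpos.ne'
    have hcan : (L' : ℤ) * padicValRat (p j) r = (d' : ℤ) * (a j * ((L / b j : ℕ) : ℤ)) := by
      set e : ℤ := a j * ((L / b j : ℕ) : ℤ) with he
      rw [hgL', hgd', Nat.cast_mul, Nat.cast_mul, mul_assoc, mul_assoc] at hv
      exact mul_left_cancel₀ hg0 hv
    have hdvd' : (L' : ℤ) ∣ (d' : ℤ) * (a j * ((L / b j : ℕ) : ℤ)) :=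
      ⟨_, hcan.symm⟩
    have hcop' : IsCoprime (L' : ℤ) (d' : ℤ) := Nat.isCoprime_iff_coprime.2 hcopr.symm
    have hfin : (L' : ℤ) ∣ a j * ((L / b j : ℕ) : ℤ) := hcop'.dvd_of_dvd_mul_left hdvd'
    exact hj ((Int.natCast_dvd_natCast.2 hqL').trans hfin)
  have hdL : d = L := le_antisymm hdle (Nat.le_of_dvd hd0 hLd)
  -- conclude X^L - C c = P
  have hPeq : (X : ℚ[X]) ^ L - C c = P := by
    obtain ⟨u, hu⟩ := hdvd
    have hu0 : u ≠ 0 := by rintro rfl; simp at hu; exact hne hu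
    have hdegu : u.natDegree = 0 := by
      have := natDegree_mul (hPmonic.ne_zero) hu0
      rw [← hu, natDegree_X_pow_sub_C, ← hd, hdL] at this
      omega
    have hulead : u.leadingCoeff = 1 := by
      have := (monic_X_pow_sub_C c hL0)
      rw [Monic, hu, leadingCoeff_mul, hPmonic.leadingCoeff, one_mul] at this
      exact this
    have hu1 : u.coeff 0 = 1 := by rwa [leadingCoeff, hdegu] at hulead
    have : u = 1 := by
      rw [eq_C_of_natDegree_eq_zero hdegu, hu1, map_one]
    rw [hu, this, mul_one]
  rw [hPeq]
  exact minpoly.irreducible hint
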